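/- For all formulas A and B, the following formulas are derivable in GAMALL: ◇(□A ⊸ □□A), ◇(◇A ⊸ □◇A), ◇(A ⊸ □◇A), ◇(◇A ⊸ A), ◇(A ⊸ □A), and ◇(A ⊸ □B) ⊸ ◇(□A ⊸ B); the first three are ◇-forms of the modal axioms S4, S5 and B respectively. -/

import Mathlib

/-- Formulas of MALL: atoms, constants 0, 1, ⊥, ⊤, negation, tensor ⊗,
par ⊕, additive conjunction ∧ and additive disjunction ∨. -/
inductive MF : Type
  | atom : Nat → MF
  | zero : MF
  | one : MF
  | bot : MF
  | top : MF
  | neg : MF → MF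
  | tensor : MF → MF → MF
  | par : MF → MF → MF
  | conj : MF → MF → MF
  | disj : MF → MF → MF

/-- Linear implication A ⊸ B := ¬A ⊕ B. -/
def MF.imp (A B : MF) : MF := MF.par (MF.neg A) B

/-- Tarskian possibility ◇A := ¬A ⊸ A. -/
def MF.diam (A : MF) : MF := MF.imp (MF.neg A) A

/-- Tarskian necessity □A := ¬◇¬A. -/
def MF.box (A : MF) : MF := MF.neg (MF.diam (MF.neg A))

/-- `Deriv W M C Γ Δ` : the sequent Γ ⇒ Δ (Γ, Δ finite multisets) is derivable
in GMALL extended by weakening (if `W`), mingle (if `M`), contraction (if `C`). -/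
inductive Deriv (W M C : Prop) : Multiset MF → Multiset MF → Prop
  | id (A : MF) : Deriv W M C {A} {A}
  | l0 : Deriv W M C {MF.zero} 0
  | r0 {Γ Δ} : Deriv W M C Γ Δ → Deriv W M C Γ (MF.zero ::ₘ Δ)
  | l1 {Γ Δ} : Deriv W M C Γ Δ → Deriv W M C (MF.one ::ₘ Γ) Δ
  | r1 : Deriv W M C 0 {MF.one}
  | lbot {Γ Δ} : Deriv W M C (MF.bot ::ₘ Γ) Δ
  | rtop {Γ Δ} : Deriv W M C Γ (MF.top ::ₘ Δ)
  | ltensor {A B Γ Δ} : Deriv W M C (A ::ₘ B ::ₘ Γ) Δ →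
      Deriv W M C (MF.tensor A B ::ₘ Γ) Δ
  | rtensor {A B Γ Γ' Δ Δ'} : Deriv W M C Γ (A ::ₘ Δ) → Deriv W M C Γ' (B ::ₘ Δ') →
      Deriv W M C (Γ + Γ') (MF.tensor A B ::ₘ (Δ + Δ'))
  | lpar {A B Γ Γ' Δ Δ'} : Deriv W M C (A ::ₘ Γ) Δ → Deriv W M C (B ::ₘ Γ') Δ' →
      Deriv W M C (MF.par A B ::ₘ (Γ + Γ')) (Δ + Δ')
  | rpar {A B Γ Δ} : Deriv W M C Γ (A ::ₘ B ::ₘ Δ) →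
      Deriv W M C Γ (MF.par A B ::ₘ Δ)
  | lconj1 {A B Γ Δ} : Deriv W M C (A ::ₘ Γ) Δ → Deriv W M C (MF.conj A B ::ₘ Γ) Δ
  | lconj2 {A B Γ Δ} : Deriv W M C (B ::ₘ Γ) Δ → Deriv W M C (MF.conj A B ::ₘ Γ) Δ
  | rconj {A B Γ Δ} : Deriv W M C Γ (A ::ₘ Δ) → Deriv W M C Γ (B ::ₘ Δ) →
      Deriv W M C Γ (MF.conj A B ::ₘ Δ)
  | ldisj {A B Γ Δ} : Deriv W M C (A ::ₘ Γ) Δ → Deriv W M C (B ::ₘ Γ) Δ →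
      Deriv W M C (MF.disj A B ::ₘ Γ) Δ
  | rdisj1 {A B Γ Δ} : Deriv W M C Γ (A ::ₘ Δ) → Deriv W M C Γ (MF.disj A B ::ₘ Δ)
  | rdisj2 {A B Γ Δ} : Deriv W M C Γ (B ::ₘ Δ) → Deriv W M C Γ (MF.disj A B ::ₘ Δ)
  | lneg {A Γ Δ} : Deriv W M C Γ (A ::ₘ Δ) → Deriv W M C (MF.neg A ::ₘ Γ) Δ
  | rneg {A Γ Δ} : Deriv W M C (A ::ₘ Γ) Δ → Deriv W M C Γ (MF.neg A ::ₘ Δ)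
  | limp {A B Γ Γ' Δ Δ'} : Deriv W M C Γ (A ::ₘ Δ) → Deriv W M C (B ::ₘ Γ') Δ' →
      Deriv W M C (MF.imp A B ::ₘ (Γ + Γ')) (Δ + Δ')
  | rimp {A B Γ Δ} : Deriv W M C (A ::ₘ Γ) (B ::ₘ Δ) →
      Deriv W M C Γ (MF.imp A B ::ₘ Δ)
  | lw {A Γ Δ} : W → Deriv W M C Γ Δ → Deriv W M C (A ::ₘ Γ) Δ
  | rw {A Γ Δ} : W → Deriv W M C Γ Δ → Deriv W M C Γ (A ::ₘ Δ)
  | mingle {Γ Γ' Δ Δ'} : M → Deriv W M C Γ Δ → Deriv W M C Γ' Δ' →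
      Deriv W M C (Γ + Γ') (Δ + Δ')
  | lc {A Γ Δ} : C → Deriv W M C (A ::ₘ A ::ₘ Γ) Δ → Deriv W M C (A ::ₘ Γ) Δ
  | rc {A Γ Δ} : C → Deriv W M C Γ (A ::ₘ A ::ₘ Δ) → Deriv W M C Γ (A ::ₘ Δ)

/-- GMALL : no extra structural rules. -/
def GMALL : Multiset MF → Multiset MF → Prop := Deriv False False False

/-- GMALL + the mingle rule M. -/
def GMALLM : Multiset MF → Multiset MF → Prop := Deriv False True False

/-- GAMALL : GMALL + weakening. -/
def GAMALL : Multiset MF → Multiset MF → Prop := Deriv True False False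

/-- GSLL : GMALL + contraction. -/
def GSLL : Multiset MF → Multiset MF → Prop := Deriv False False True


section Aux
abbrev GA := Deriv True False False

lemma gcast {Γ Γ' Δ Δ' : Multiset MF} (h : GA Γ Δ) (hΓ : Γ = Γ') (hΔ : Δ = Δ') :
    GA Γ' Δ' := hΓ ▸ hΔ ▸ h

/-- ¬X, X ⇒ -/
lemma negL (X : MF) : GA {X.neg, X} 0 := Deriv.lneg (Deriv.id X)

lemma tripleNegL {X : MF} {Γ} (h : GA (X.neg ::ₘ Γ) 0) : GA (X.neg.neg.neg ::ₘ Γ) 0 :=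
  Deriv.lneg (Deriv.rneg h)

/-- From two refutations of ¬Y, build Γ₁+Γ₂ ⇒ □Y. -/
lemma boxOf (Y : MF) {Γ₁ Γ₂ : Multiset MF} (h₁ : GA (Y.neg ::ₘ Γ₁) 0)
    (h₂ : GA (Y.neg ::ₘ Γ₂) 0) : GA (Γ₁ + Γ₂) {Y.box} := by
  have h3 := Deriv.lpar (tripleNegL h₁) h₂
  have h4 : GA ((MF.diam Y.neg) ::ₘ (Γ₁ + Γ₂)) 0 := gcast h3 rfl (by simp)
  exact Deriv.rneg h4

/-- X, X ⇒ □X -/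
lemma boxTwo (X : MF) : GA {X, X} {X.box} :=
  gcast (boxOf X (negL X) (negL X)) (by simp) rfl

/-- □X ⇒ X -/
lemma boxElim (X : MF) : GA {X.box} {X} :=
  Deriv.lneg (Deriv.rimp (Deriv.lneg (Deriv.rneg (Deriv.rneg (Deriv.lw trivial (Deriv.id X))))))

/-- X ⇒ ◇X -/
lemma diamR (X : MF) : GA {X} {X.diam} :=
  Deriv.rimp (Deriv.lw trivial (Deriv.id X))

/-- ¬◇X, X ⇒ -/
lemma negDiamL (X : MF) : GA (X.diam.neg ::ₘ {X}) 0 := Deriv.lneg (diamR X)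

/-- ◇X ⇒ X, X -/
lemma diamElim2 (X : MF) : GA {X.diam} {X, X} :=
  gcast (Deriv.lpar (Deriv.lneg (Deriv.rneg (Deriv.id X))) (Deriv.id X)) (by simp [MF.diam, MF.imp]) (by simp)

/-- weaken right to duplicate -/
lemma dupR {Γ : Multiset MF} {G : MF} (h : GA Γ {G}) : GA Γ {G, G} :=
  Deriv.rw trivial h

/-- F,F ⇒ G,G gives ⇒ ◇(F ⊸ G). -/
lemma diamImp (F G : MF) (h : GA {F, F} {G, G}) : GA 0 {(MF.imp F G).diam} := by
  have h1 : GA {F} ((MF.imp F G) ::ₘ {G}) := Deriv.rimp h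
  have h2 : GA {F} (G ::ₘ {MF.imp F G}) := gcast h1 rfl (Multiset.cons_swap _ _ _)
  have h3 : GA 0 ((MF.imp F G) ::ₘ {MF.imp F G}) := Deriv.rimp h2
  exact Deriv.rimp (Deriv.lneg h3)

lemma sixth (A B : MF) :
    GA 0 {MF.imp (MF.imp A B.box).diam (MF.imp A.box B).diam} := by
  set D1 := MF.imp A B.box with hD1
  have hD : GA (D1 ::ₘ {A.box}) {B} :=
    gcast (Deriv.limp (boxElim A) (boxElim B)) (by simp; rfl) (by simp)
  have hnn : GA (D1.neg.neg ::ₘ {A.box}) {B} := Deriv.lneg (Deriv.rneg hD)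
  have hpar := Deriv.lpar hnn hD
  have hcore : GA (A.box ::ₘ A.box ::ₘ {D1.diam}) (B ::ₘ {B}) := by
    refine gcast hpar ?_ (by simp)
    simp only [Multiset.singleton_add]
    rw [Multiset.cons_swap]
    congr 1
    rw [show ({A.box} : Multiset MF) = A.box ::ₘ 0 from rfl, Multiset.cons_swap]
    rfl
  have h4 : GA (A.box ::ₘ {D1.diam}) ((MF.imp A.box B) ::ₘ {B}) := Deriv.rimp hcore
  have h4' : GA (A.box ::ₘ {D1.diam}) (B ::ₘ {MF.imp A.box B}) :=
    gcast h4 rfl (Multiset.cons_swap _ _ _)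
  have h5 : GA {D1.diam} ((MF.imp A.box B) ::ₘ {MF.imp A.box B}) := Deriv.rimp h4'
  have h6 : GA ((MF.imp A.box B).neg ::ₘ {D1.diam}) {MF.imp A.box B} := Deriv.lneg h5
  have h7 : GA {D1.diam} {(MF.imp A.box B).diam} := Deriv.rimp h6
  exact Deriv.rimp h7

end Aux

/-- ◇-forms of S4, S5 and B, and related formulas, are derivable in GAMALL. -/
theorem gamall_diamond_forms (A B : MF) :
    GAMALL 0 {(MF.imp A.box A.box.box).diam} ∧
    GAMALL 0 {(MF.imp A.diam A.diam.box).diam} ∧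
    GAMALL 0 {(MF.imp A A.diam.box).diam} ∧
    GAMALL 0 {(MF.imp A.diam A).diam} ∧
    GAMALL 0 {(MF.imp A A.box).diam} ∧
    GAMALL 0 {MF.imp (MF.imp A B.box).diam (MF.imp A.box B).diam} := by
  refine ⟨?_, ?_, ?_, ?_, ?_, ?_⟩
  · exact diamImp _ _ (dupR (boxTwo A.box))
  · exact diamImp _ _ (dupR (boxTwo A.diam))
  · exact diamImp _ _ (dupR (gcast (boxOf A.diam (negDiamL A) (negDiamL A)) (by simp) rfl))
  · exact diamImp _ _ (Deriv.lw trivial (diamElim2 A))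
  · exact diamImp _ _ (dupR (boxTwo A))
  · exact sixth A B
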